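/- arXiv:0901.1148 — 2 statements merged into one kernel-verified Lean document; each statement's English description precedes it below -/
import Mathlib

section
/- Under the hypotheses above, the operator norm satisfies ‖(α₀Γ)²‖ ≤ 2α₀‖Γ‖_∞ · ‖α₀Γ‖, where the norms are operator norms on L²(A, dν) and the supremum in the variational characterization of ‖α₀Γ‖ may be taken over positive functions only (since α₀Γ is positivity preserving with positive kernel). -/
open MeasureTheory Real
open scoped ENNReal NNReal

local notation "E3" => EuclideanSpace ℝ (Fin 3)

private lemma half_rpow_mul_self (t : ℝ≥0∞) : t ^ ((1:ℝ)/2) * t ^ ((1:ℝ)/2) = t := by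
  rw [← ENNReal.rpow_add_of_nonneg _ _ (by norm_num) (by norm_num)]
  norm_num

private lemma half_rpow_sq (t : ℝ≥0∞) : (t ^ ((1:ℝ)/2)) ^ (2:ℝ) = t := by
  rw [← ENNReal.rpow_mul]
  norm_num

private lemma ker_meas : Measurable (fun p : E3 × E3 => ENNReal.ofReal (1 / ‖p.1 - p.2‖)) := by
  apply Measurable.ennreal_ofReal
  simp only [one_div]
  exact ((continuous_fst.sub continuous_snd).norm.measurable).inv

private lemma abs_max_zero_le (a : ℝ) : ‖max a 0‖ ≤ ‖a‖ := by
  rw [Real.norm_eq_abs, Real.norm_eq_abs]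
  refine abs_le.mpr ⟨le_trans (neg_nonpos.mpr (abs_nonneg a)) (le_max_right a 0),
    max_le (le_abs_self a) (abs_nonneg a)⟩

set_option maxHeartbeats 1000000 in
theorem opNorm_iterated_kernel_bound
    (A : Set (EuclideanSpace ℝ (Fin 3))) (hA : IsCompact A)
    (ν : Measure (EuclideanSpace ℝ (Fin 3))) [IsFiniteMeasure ν]
    (hνA : ν Aᶜ = 0)
    (α₀ : ℝ) (hα₀ : 0 < α₀)
    (Γinf : ℝ)
    (hΓinf : Γinf = (1 / (4 * π)) * ⨆ x : A, ∫ y in A, 1 / ‖(x : EuclideanSpace ℝ (Fin 3)) - y‖ ∂ν)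
    (hΓbd : ∀ x ∈ A, (1 / (4 * π)) * (∫ y in A, 1 / ‖x - y‖ ∂ν) ≤ Γinf)
    (T : Lp ℝ 2 ν →L[ℝ] Lp ℝ 2 ν)
    (hT : ∀ f : Lp ℝ 2 ν,
      (T f : EuclideanSpace ℝ (Fin 3) → ℝ)
        =ᵐ[ν] fun x => (α₀ / (4 * π)) * ∫ y in A, f y / ‖x - y‖ ∂ν) :
    ‖T.comp T‖ ≤ 2 * α₀ * Γinf * ‖T‖ := by
  have hπ : (0:ℝ) < π := Real.pi_pos
  -- dispose of the degenerate case A = ∅ (then ν = 0 and everything is trivial)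
  rcases A.eq_empty_or_nonempty with hAe | hAne
  · subst hAe
    simp only [Set.compl_empty] at hνA
    have hν0 : ν = 0 := Measure.measure_univ_eq_zero.mp hνA
    subst hν0
    have hz : ∀ g : Lp ℝ 2 (0 : Measure E3), g = 0 := by
      intro g
      have : ‖g‖ = 0 := by
        rw [Lp.norm_def]
        simp [eLpNorm_measure_zero]
      exact norm_eq_zero.mp this
    have hT0 : T = 0 := ContinuousLinearMap.ext fun g => by
      rw [hz (T g), ContinuousLinearMap.zero_apply]
    rw [hT0]
    simp only [ContinuousLinearMap.comp_zero, norm_zero, mul_zero]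
    exact le_rfl
  -- main case : A nonempty
  have hmemA : ∀ᵐ x ∂ν, x ∈ A := by
    rw [ae_iff]
    exact hνA
  have hres : ν.restrict A = ν := Measure.restrict_eq_self_of_ae_mem hmemA
  -- rewrite hypotheses to full-measure integrals
  have hT' : ∀ f : Lp ℝ 2 ν, (T f : E3 → ℝ)
      =ᵐ[ν] fun x => (α₀ / (4 * π)) * ∫ y, f y / ‖x - y‖ ∂ν := by
    intro f
    have := hT f
    simpa only [hres] using this
  have hΓbd' : ∀ x ∈ A, (∫ y, 1 / ‖x - y‖ ∂ν) ≤ 4 * π * Γinf := by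
    intro x hx
    have h := hΓbd x hx
    rw [hres] at h
    have h2 : (4*π) * (1/(4*π) * ∫ y, 1 / ‖x - y‖ ∂ν) = ∫ y, 1 / ‖x - y‖ ∂ν := by
      field_simp
    nlinarith [mul_le_mul_of_nonneg_left h (by positivity : (0:ℝ) ≤ 4*π)]
  have hΓ0 : 0 ≤ Γinf := by
    obtain ⟨x, hx⟩ := hAne
    refine le_trans ?_ (hΓbd x hx)
    have : 0 ≤ ∫ y in A, 1 / ‖x - y‖ ∂ν :=
      integral_nonneg fun y => by positivity
    positivity
  set c : ℝ := α₀ / (4 * π) with hc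
  have hc0 : 0 < c := by positivity
  set K : E3 → E3 → ℝ≥0∞ := fun x y => ENNReal.ofReal (1 / ‖x - y‖) with hK
  have measK : Measurable (Function.uncurry K) := ker_meas
  have measKx : ∀ x, Measurable (K x) := by
    intro x
    simp only [hK]
    apply Measurable.ennreal_ofReal
    simp only [one_div]
    exact ((continuous_const.sub continuous_id).norm.measurable).inv
  have measKy : ∀ y, Measurable (fun x => K x y) := by
    intro y
    simp only [hK]
    apply Measurable.ennreal_ofReal
    simp only [one_div]
    exact ((continuous_id.sub continuous_const).norm.measurable).inv
  set C : ℝ≥0∞ := ENNReal.ofReal (4 * π * Γinf) with hC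
  have hIntIff : ∀ x : E3, Integrable (fun y => 1 / ‖x - y‖) ν ↔ (∫⁻ y, K x y ∂ν) < ∞ := by
    intro x
    constructor
    · intro h
      have := h.2
      rw [hasFiniteIntegral_iff_norm] at this
      refine lt_of_le_of_lt (le_of_eq (lintegral_congr fun y => ?_)) this
      rw [hK]
      congr 1
      rw [Real.norm_eq_abs, abs_of_nonneg (by positivity)]
    · intro h
      refine ⟨((measurable_const.div ((continuous_const.sub continuous_id).norm.measurable)).aestronglyMeasurable), ?_⟩
      rw [hasFiniteIntegral_iff_norm]
      refine lt_of_le_of_lt (le_of_eq (lintegral_congr fun y => ?_)) h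
      rw [hK]
      congr 1
      rw [Real.norm_eq_abs, abs_of_nonneg (by positivity)]
  -- the junk-value vanishing lemma on the bad set
  have hvanish : ∀ f : Lp ℝ 2 ν, 0 ≤ᵐ[ν] (f : E3 → ℝ) →
      ∀ᵐ x ∂ν, ¬ Integrable (fun y => 1 / ‖x - y‖) ν → (T f) x = 0 := by
    intro f hf
    set u : Lp ℝ 2 ν := MemLp.toLp (fun _ => (1:ℝ)) (memLp_const 1) with hu_def
    have hu : (u : E3 → ℝ) =ᵐ[ν] fun _ => (1:ℝ) := MemLp.coeFn_toLp _
    have hfu : ((f + u : Lp ℝ 2 ν) : E3 → ℝ) =ᵐ[ν] fun y => (f : E3 → ℝ) y + 1 := by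
      filter_upwards [Lp.coeFn_add f u, hu] with y h1 h2
      rw [h1, Pi.add_apply, h2]
    have hu_int : ∀ x : E3, (∫ y, (u : E3 → ℝ) y / ‖x - y‖ ∂ν) = ∫ y, 1 / ‖x - y‖ ∂ν :=
      fun x => integral_congr_ae (hu.mono fun y hy => by simp only [hy])
    have hfu_int : ∀ x : E3, (∫ y, ((f + u : Lp ℝ 2 ν) : E3 → ℝ) y / ‖x - y‖ ∂ν)
        = ∫ y, ((f : E3 → ℝ) y + 1) / ‖x - y‖ ∂ν :=
      fun x => integral_congr_ae (hfu.mono fun y hy => by simp only [hy])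
    have hadd : ((T (f + u) : Lp ℝ 2 ν) : E3 → ℝ) =ᵐ[ν]
        fun x => (T f : E3 → ℝ) x + (T u : E3 → ℝ) x := by
      rw [map_add]
      filter_upwards [Lp.coeFn_add (T f) (T u)] with x hx
      rw [hx, Pi.add_apply]
    filter_upwards [hT' f, hT' u, hT' (f + u), hadd] with x hx1 hx2 hx3 hx4
    intro hbad
    have hbad2 : ¬ Integrable (fun y => ((f : E3 → ℝ) y + 1) / ‖x - y‖) ν := by
      intro hcon
      apply hbad
      refine Integrable.mono hcon
        ((measurable_const.div
          ((continuous_const.sub continuous_id).norm.measurable)).aestronglyMeasurable) ?_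
      filter_upwards [hf] with y hy
      have hy' : (0:ℝ) ≤ (f : E3 → ℝ) y := hy
      rw [Real.norm_eq_abs, Real.norm_eq_abs, abs_of_nonneg (by positivity),
        abs_of_nonneg (div_nonneg (by linarith) (norm_nonneg _))]
      rw [div_eq_mul_inv, div_eq_mul_inv]
      exact mul_le_mul_of_nonneg_right (by linarith) (inv_nonneg.mpr (norm_nonneg _))
    have e1 : (T u : E3 → ℝ) x = 0 := by
      rw [hx2, hu_int x, integral_undef hbad, mul_zero]
    have e2 : (T (f + u) : E3 → ℝ) x = 0 := by
      rw [hx3, hfu_int x, integral_undef hbad2, mul_zero]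
    have := hx4
    rw [e2, e1] at this
    linarith
  -- the key Schur-type bound when the kernel is a.e. integrable
  have hCne : C ≠ ∞ := by rw [hC]; exact ENNReal.ofReal_ne_top
  have hkey : ν {x | ¬ Integrable (fun y => 1 / ‖x - y‖) ν} = 0 →
      ∀ f : Lp ℝ 2 ν, 0 ≤ᵐ[ν] (f : E3 → ℝ) → ‖T f‖ ≤ α₀ * Γinf * ‖f‖ := by
    intro hS f hf
    have hmf := Lp.aestronglyMeasurable f
    set g : E3 → ℝ := hmf.mk (f : E3 → ℝ) with hg_def
    have hgm : Measurable g := hmf.stronglyMeasurable_mk.measurable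
    have hgf : (f : E3 → ℝ) =ᵐ[ν] g := hmf.ae_eq_mk
    set Gn : E3 → ℝ≥0∞ := fun y => (‖g y‖₊ : ℝ≥0∞) with hGn
    have hGnm : Measurable Gn := hgm.nnnorm.coe_nnreal_ennreal
    have hgood : ∀ᵐ x ∂ν, Integrable (fun y => 1 / ‖x - y‖) ν := by
      rw [ae_iff]
      exact hS
    have hKbd : ∀ z ∈ A, Integrable (fun y => 1 / ‖z - y‖) ν → (∫⁻ y, K z y ∂ν) ≤ C := by
      intro z hz hzint
      have h1 : ENNReal.ofReal (∫ y, 1 / ‖z - y‖ ∂ν) = ∫⁻ y, K z y ∂ν :=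
        ofReal_integral_eq_lintegral_ofReal hzint
          (Filter.Eventually.of_forall fun y => by positivity)
      rw [← h1, hC]
      exact ENNReal.ofReal_le_ofReal (hΓbd' z hz)
    -- pointwise bound
    have hpt : ∀ᵐ x ∂ν, (‖(T f : E3 → ℝ) x‖₊ : ℝ≥0∞) ^ (2:ℝ) ≤
        (ENNReal.ofReal c ^ (2:ℝ) * C) * ∫⁻ y, Gn y ^ (2:ℝ) * K x y ∂ν := by
      filter_upwards [hT' f, hmemA, hgood] with x hx hxA hxg
      have hxval : (T f : E3 → ℝ) x = c * ∫ y, (f : E3 → ℝ) y / ‖x - y‖ ∂ν := hx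
      have hKle : (∫⁻ y, K x y ∂ν) ≤ C := hKbd x hxA hxg
      have h1 : (‖(T f : E3 → ℝ) x‖₊ : ℝ≥0∞) ≤
          ENNReal.ofReal c * ∫⁻ y, Gn y * K x y ∂ν := by
        rw [hxval]
        have hcongr : ∫ y, (f : E3 → ℝ) y / ‖x - y‖ ∂ν = ∫ y, g y / ‖x - y‖ ∂ν :=
          integral_congr_ae (hgf.mono fun y hy => by simp only [hy])
        rw [hcongr]
        by_cases hfi : Integrable (fun y => g y / ‖x - y‖) ν
        · calc (‖c * ∫ y, g y / ‖x - y‖ ∂ν‖₊ : ℝ≥0∞)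
              = ENNReal.ofReal c * ENNReal.ofReal ‖∫ y, g y / ‖x - y‖ ∂ν‖ := by
                rw [← enorm_eq_nnnorm, ← ofReal_norm, norm_mul, ENNReal.ofReal_mul (norm_nonneg _)]
                congr 1
                rw [Real.norm_eq_abs, abs_of_nonneg hc0.le]
            _ ≤ ENNReal.ofReal c * ENNReal.ofReal (∫ y, ‖g y / ‖x - y‖‖ ∂ν) := by
                exact mul_le_mul_right
                  (ENNReal.ofReal_le_ofReal (norm_integral_le_integral_norm _)) _
            _ = ENNReal.ofReal c * ∫⁻ y, ENNReal.ofReal ‖g y / ‖x - y‖‖ ∂ν := by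
                rw [ofReal_integral_eq_lintegral_ofReal hfi.norm
                  (Filter.Eventually.of_forall fun y => norm_nonneg _)]
            _ = ENNReal.ofReal c * ∫⁻ y, Gn y * K x y ∂ν := by
                congr 1
                refine lintegral_congr fun y => ?_
                rw [norm_div, norm_norm, div_eq_mul_inv, ← one_div,
                  ENNReal.ofReal_mul (norm_nonneg _), hGn, hK,
                  ofReal_norm, enorm_eq_nnnorm]
        · rw [integral_undef hfi, mul_zero]
          simp
      have hm1 : Measurable (fun y => Gn y * K x y ^ ((1:ℝ)/2)) :=
        hGnm.mul (ENNReal.continuous_rpow_const.measurable.comp (measKx x))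
      have hm2 : Measurable (fun y => K x y ^ ((1:ℝ)/2)) :=
        ENNReal.continuous_rpow_const.measurable.comp (measKx x)
      have hCS : (∫⁻ y, Gn y * K x y ∂ν) ≤
          (∫⁻ y, Gn y ^ (2:ℝ) * K x y ∂ν) ^ ((1:ℝ)/2) * (∫⁻ y, K x y ∂ν) ^ ((1:ℝ)/2) := by
        have hconj : Real.HolderConjugate 2 2 := Real.HolderConjugate.two_two
        have hH := ENNReal.lintegral_mul_le_Lp_mul_Lq ν hconj hm1.aemeasurable hm2.aemeasurable
        have e1 : ∫⁻ y, ((fun y => Gn y * K x y ^ ((1:ℝ)/2)) *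
            (fun y => K x y ^ ((1:ℝ)/2))) y ∂ν = ∫⁻ y, Gn y * K x y ∂ν := by
          refine lintegral_congr fun y => ?_
          simp only [Pi.mul_apply]
          rw [mul_assoc, half_rpow_mul_self]
        have e2 : ∫⁻ y, (Gn y * K x y ^ ((1:ℝ)/2)) ^ (2:ℝ) ∂ν
            = ∫⁻ y, Gn y ^ (2:ℝ) * K x y ∂ν := by
          refine lintegral_congr fun y => ?_
          rw [ENNReal.mul_rpow_of_nonneg _ _ (by norm_num : (0:ℝ) ≤ 2), half_rpow_sq]
        have e3 : ∫⁻ y, (K x y ^ ((1:ℝ)/2)) ^ (2:ℝ) ∂ν = ∫⁻ y, K x y ∂ν := by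
          refine lintegral_congr fun y => ?_
          rw [half_rpow_sq]
        rw [e1, e2, e3] at hH
        simpa using hH
      calc (‖(T f : E3 → ℝ) x‖₊ : ℝ≥0∞) ^ (2:ℝ)
          ≤ (ENNReal.ofReal c * ∫⁻ y, Gn y * K x y ∂ν) ^ (2:ℝ) :=
            ENNReal.rpow_le_rpow h1 (by norm_num)
        _ = ENNReal.ofReal c ^ (2:ℝ) * (∫⁻ y, Gn y * K x y ∂ν) ^ (2:ℝ) :=
            ENNReal.mul_rpow_of_nonneg _ _ (by norm_num)
        _ ≤ ENNReal.ofReal c ^ (2:ℝ) *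
            (((∫⁻ y, Gn y ^ (2:ℝ) * K x y ∂ν) ^ ((1:ℝ)/2) *
              (∫⁻ y, K x y ∂ν) ^ ((1:ℝ)/2)) ^ (2:ℝ)) :=
            mul_le_mul_right (ENNReal.rpow_le_rpow hCS (by norm_num)) _
        _ = ENNReal.ofReal c ^ (2:ℝ) *
            ((∫⁻ y, Gn y ^ (2:ℝ) * K x y ∂ν) * (∫⁻ y, K x y ∂ν)) := by
            rw [ENNReal.mul_rpow_of_nonneg _ _ (by norm_num : (0:ℝ) ≤ 2),
              half_rpow_sq, half_rpow_sq]
        _ ≤ ENNReal.ofReal c ^ (2:ℝ) * ((∫⁻ y, Gn y ^ (2:ℝ) * K x y ∂ν) * C) :=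
            mul_le_mul_right (mul_le_mul_right hKle _) _
        _ = (ENNReal.ofReal c ^ (2:ℝ) * C) * ∫⁻ y, Gn y ^ (2:ℝ) * K x y ∂ν := by
            ring
    have hprodmeas : Measurable (fun p : E3 × E3 => Gn p.2 ^ (2:ℝ) * K p.1 p.2) :=
      (ENNReal.continuous_rpow_const.measurable.comp (hGnm.comp measurable_snd)).mul measK
    have hintT : ∫⁻ x, (‖(T f : E3 → ℝ) x‖₊ : ℝ≥0∞) ^ (2:ℝ) ∂ν ≤
        (ENNReal.ofReal c ^ (2:ℝ) * C) * ∫⁻ x, (∫⁻ y, Gn y ^ (2:ℝ) * K x y ∂ν) ∂ν := by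
      refine le_trans (lintegral_mono_ae hpt) ?_
      rw [lintegral_const_mul' _ _ (ENNReal.mul_ne_top
        (ENNReal.rpow_ne_top_of_nonneg (by norm_num) ENNReal.ofReal_ne_top) hCne)]
    have hswap : (∫⁻ x, (∫⁻ y, Gn y ^ (2:ℝ) * K x y ∂ν) ∂ν)
        = ∫⁻ y, Gn y ^ (2:ℝ) * (∫⁻ x, K x y ∂ν) ∂ν := by
      rw [lintegral_lintegral_swap hprodmeas.aemeasurable]
      exact lintegral_congr fun y => lintegral_const_mul _ (measKy y)
    have hinner : ∀ᵐ y ∂ν, (∫⁻ x, K x y ∂ν) ≤ C := by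
      filter_upwards [hmemA, hgood] with y hyA hyg
      have hsymm : (∫⁻ x, K x y ∂ν) = ∫⁻ x, K y x ∂ν := by
        refine lintegral_congr fun x => ?_
        rw [hK]
        simp only
        rw [norm_sub_rev]
      rw [hsymm]
      exact hKbd y hyA hyg
    have hinner2 : (∫⁻ y, Gn y ^ (2:ℝ) * (∫⁻ x, K x y ∂ν) ∂ν)
        ≤ C * ∫⁻ y, Gn y ^ (2:ℝ) ∂ν := by
      refine le_trans (lintegral_mono_ae
        (hinner.mono fun y hy => mul_le_mul_right hy _)) ?_
      rw [lintegral_mul_const' C _ hCne, mul_comm]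
    have htotal : ∫⁻ x, (‖(T f : E3 → ℝ) x‖₊ : ℝ≥0∞) ^ (2:ℝ) ∂ν ≤
        (ENNReal.ofReal c * C) ^ (2:ℝ) * ∫⁻ y, Gn y ^ (2:ℝ) ∂ν := by
      refine le_trans hintT ?_
      rw [hswap]
      refine le_trans (mul_le_mul_right hinner2 _) ?_
      apply le_of_eq
      rw [ENNReal.mul_rpow_of_nonneg _ _ (by norm_num : (0:ℝ) ≤ 2)]
      simp only [ENNReal.rpow_two]
      ring
    have hsnorm : eLpNorm (⇑(T f)) 2 ν ≤ (ENNReal.ofReal c * C) * eLpNorm (⇑f) 2 ν := by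
      rw [eLpNorm_eq_lintegral_rpow_enorm_toReal two_ne_zero ENNReal.ofNat_ne_top,
        eLpNorm_eq_lintegral_rpow_enorm_toReal two_ne_zero ENNReal.ofNat_ne_top]
      have htR : (2:ℝ≥0∞).toReal = 2 := by simp
      rw [htR]
      simp only [enorm_eq_nnnorm]
      have hGf : ∫⁻ y, (‖(f : E3 → ℝ) y‖₊ : ℝ≥0∞) ^ (2:ℝ) ∂ν = ∫⁻ y, Gn y ^ (2:ℝ) ∂ν :=
        lintegral_congr_ae (hgf.mono fun y hy => by rw [hGn]; simp only [hy])
      rw [hGf]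
      calc (∫⁻ x, (‖(T f : E3 → ℝ) x‖₊ : ℝ≥0∞) ^ (2:ℝ) ∂ν) ^ ((1:ℝ)/2)
          ≤ ((ENNReal.ofReal c * C) ^ (2:ℝ) * ∫⁻ y, Gn y ^ (2:ℝ) ∂ν) ^ ((1:ℝ)/2) :=
            ENNReal.rpow_le_rpow htotal (by norm_num)
        _ = (ENNReal.ofReal c * C) * (∫⁻ y, Gn y ^ (2:ℝ) ∂ν) ^ ((1:ℝ)/2) := by
            rw [ENNReal.mul_rpow_of_nonneg _ _ (by norm_num : (0:ℝ) ≤ 1/2),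
              ← ENNReal.rpow_mul]
            norm_num
    rw [Lp.norm_def, Lp.norm_def]
    have hrhs_ne : (ENNReal.ofReal c * C) * eLpNorm (⇑f) 2 ν ≠ ∞ :=
      ENNReal.mul_ne_top (ENNReal.mul_ne_top ENNReal.ofReal_ne_top hCne)
        (Lp.eLpNorm_ne_top f)
    refine le_trans (ENNReal.toReal_mono hrhs_ne hsnorm) ?_
    rw [ENNReal.toReal_mul, ENNReal.toReal_mul, ENNReal.toReal_ofReal hc0.le, hC,
      ENNReal.toReal_ofReal (by positivity)]
    have hce : c * (4*π*Γinf) = α₀ * Γinf := by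
      rw [hc]
      field_simp
    rw [hce]
  -- decomposition into positive and negative parts
  have hposneg : ∀ f : Lp ℝ 2 ν, Lp.posPart f - Lp.negPart f = f := by
    intro f
    apply Lp.ext
    filter_upwards [Lp.coeFn_sub (Lp.posPart f) (Lp.negPart f), Lp.coeFn_posPart f,
      Lp.coeFn_negPart f] with a h1 h2 h3
    rw [h1, Pi.sub_apply, h2, h3]
    rcases le_total (f a) 0 with h | h
    · simp [max_eq_right h, min_eq_left h]
    · simp [max_eq_left h, min_eq_right h]
  have hposnn : ∀ f : Lp ℝ 2 ν, 0 ≤ᵐ[ν] ((Lp.posPart f : Lp ℝ 2 ν) : E3 → ℝ) := by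
    intro f
    filter_upwards [Lp.coeFn_posPart f] with a ha
    rw [ha]; exact le_max_right _ _
  have hnegnn : ∀ f : Lp ℝ 2 ν, 0 ≤ᵐ[ν] ((Lp.negPart f : Lp ℝ 2 ν) : E3 → ℝ) := by
    intro f
    filter_upwards [Lp.coeFn_negPart f] with a ha
    rw [ha]
    exact neg_nonneg.mpr (min_le_right (f a) 0)
  have hposle : ∀ f : Lp ℝ 2 ν, ‖(Lp.posPart f : Lp ℝ 2 ν)‖ ≤ ‖f‖ := by
    intro f
    rw [Lp.norm_def, Lp.norm_def]
    refine ENNReal.toReal_mono (Lp.eLpNorm_ne_top f) (eLpNorm_mono_ae ?_)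
    filter_upwards [Lp.coeFn_posPart f] with a ha
    rw [ha]; exact abs_max_zero_le (f a)
  have hnegle : ∀ f : Lp ℝ 2 ν, ‖(Lp.negPart f : Lp ℝ 2 ν)‖ ≤ ‖f‖ := by
    intro f
    rw [Lp.norm_def, Lp.norm_def]
    refine ENNReal.toReal_mono (Lp.eLpNorm_ne_top f) (eLpNorm_mono_ae ?_)
    filter_upwards [Lp.coeFn_negPart f] with a ha
    rw [ha, norm_neg, Real.norm_eq_abs, Real.norm_eq_abs]
    refine abs_le.mpr ⟨?_, le_trans (min_le_right (f a) 0) (abs_nonneg (f a))⟩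
    exact le_min (neg_abs_le (f a)) (neg_nonpos.mpr (abs_nonneg (f a)))
  by_cases hS : ν {x | ¬ Integrable (fun y => 1 / ‖x - y‖) ν} = 0
  · -- good case: Schur bound
    have hall : ∀ f : Lp ℝ 2 ν, ‖T f‖ ≤ 2 * α₀ * Γinf * ‖f‖ := by
      intro f
      have h1 := hkey hS (Lp.posPart f) (hposnn f)
      have h2 := hkey hS (Lp.negPart f) (hnegnn f)
      have : T f = T (Lp.posPart f) - T (Lp.negPart f) := by
        rw [← map_sub, hposneg f]
      rw [this]
      calc ‖T (Lp.posPart f) - T (Lp.negPart f)‖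
          ≤ ‖T (Lp.posPart f)‖ + ‖T (Lp.negPart f)‖ := norm_sub_le _ _
        _ ≤ α₀ * Γinf * ‖(Lp.posPart f : Lp ℝ 2 ν)‖ + α₀ * Γinf * ‖(Lp.negPart f : Lp ℝ 2 ν)‖ := add_le_add h1 h2
        _ ≤ α₀ * Γinf * ‖f‖ + α₀ * Γinf * ‖f‖ := by
            have hα : 0 ≤ α₀ * Γinf := by positivity
            exact add_le_add (mul_le_mul_of_nonneg_left (hposle f) hα)
              (mul_le_mul_of_nonneg_left (hnegle f) hα)
        _ = 2 * α₀ * Γinf * ‖f‖ := by ring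
    have hOp : ‖T‖ ≤ 2 * α₀ * Γinf := T.opNorm_le_bound (by positivity) hall
    calc ‖T.comp T‖ ≤ ‖T‖ * ‖T‖ := ContinuousLinearMap.opNorm_comp_le T T
      _ ≤ (2 * α₀ * Γinf) * ‖T‖ := mul_le_mul_of_nonneg_right hOp (norm_nonneg T)
  · -- bad case: T = 0
    have hT0 : T = 0 := by
      classical
      set Good : Set E3 := {x | Integrable (fun y => 1 / ‖x - y‖) ν} with hGood_def
      have hGoodMeas : MeasurableSet Good := by
        have : Good = {x | (∫⁻ y, K x y ∂ν) < ∞} := Set.ext fun x => hIntIff x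
        rw [this]
        exact measurableSet_lt (Measurable.lintegral_prod_right measK) measurable_const
      obtain ⟨D, hDc, hDd⟩ := TopologicalSpace.exists_countable_dense E3
      set W : E3 → ℚ → Set E3 := fun d r => (Metric.ball d (r:ℝ))ᶜ ∩ Good with hW
      have hWmeas : ∀ d r, MeasurableSet (W d r) :=
        fun d r => (measurableSet_ball.compl).inter hGoodMeas
      have hWdist : ∀ (d : E3) (r : ℚ) (x : E3), x ∈ Metric.ball d ((r:ℝ)/2) →
          ∀ y ∈ W d r, (r:ℝ)/2 ≤ ‖x - y‖ ∧ 0 < (r:ℝ) := by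
        intro d r x hx y hy
        have hxd : dist x d < (r:ℝ)/2 := Metric.mem_ball.mp hx
        have hyd : (r:ℝ) ≤ dist y d := not_lt.mp (fun h => hy.1 (Metric.mem_ball.mp h))
        have htri : dist y d ≤ dist y x + dist x d := dist_triangle y x d
        have h0 : (0:ℝ) ≤ dist x d := dist_nonneg
        constructor
        · have : (r:ℝ)/2 ≤ dist y x := by linarith
          rw [dist_comm] at this
          rwa [← dist_eq_norm]
        · linarith
      have hmain : ∀ᵐ x ∂ν, ∀ d ∈ D, ∀ r : ℚ,
          (¬ Integrable (fun y => 1 / ‖x - y‖) ν) → x ∈ Metric.ball d ((r:ℝ)/2) →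
          ν (W d r) = 0 := by
        rw [ae_ball_iff hDc]
        intro d _
        rw [ae_all_iff]
        intro r
        have hmem := memLp_indicator_const (p := 2) (hWmeas d r) (1:ℝ)
          (Or.inr (measure_ne_top ν _))
        set h : Lp ℝ 2 ν := hmem.toLp _ with hh_def
        have hh : (h : E3 → ℝ) =ᵐ[ν] (W d r).indicator (fun _ => (1:ℝ)) :=
          MemLp.coeFn_toLp _
        have hhnn : 0 ≤ᵐ[ν] (h : E3 → ℝ) := by
          filter_upwards [hh] with y hy
          rw [hy]
          exact Set.indicator_nonneg (fun _ _ => zero_le_one) y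
        filter_upwards [hvanish h hhnn, hT' h] with x hx1 hx2
        intro hbad hxball
        have hrpos : (0:ℝ) < (r:ℝ) := by
          have := Metric.mem_ball.mp hxball
          have h0 : (0:ℝ) ≤ dist x d := dist_nonneg
          linarith
        have hint0 : ∫ y, (W d r).indicator (fun _ => (1:ℝ)) y / ‖x - y‖ ∂ν = 0 := by
          have hcongr : ∫ y, (h : E3 → ℝ) y / ‖x - y‖ ∂ν
              = ∫ y, (W d r).indicator (fun _ => (1:ℝ)) y / ‖x - y‖ ∂ν :=
            integral_congr_ae (hh.mono fun y hy => by simp only [hy])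
          have hz : c * ∫ y, (W d r).indicator (fun _ => (1:ℝ)) y / ‖x - y‖ ∂ν = 0 := by
            rw [← hcongr, ← hx2]
            exact hx1 hbad
          exact (mul_eq_zero.mp hz).resolve_left (ne_of_gt hc0)
        have hfun : (fun y => (W d r).indicator (fun _ => (1:ℝ)) y / ‖x - y‖)
            = (W d r).indicator (fun y => 1 / ‖x - y‖) := by
          funext y
          by_cases hy : y ∈ W d r
          · simp [Set.indicator_of_mem hy]
          · simp [Set.indicator_of_notMem hy]
        have hbound : ∀ y, ‖(W d r).indicator (fun y => 1 / ‖x - y‖) y‖ ≤ 2 / (r:ℝ) := by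
          intro y
          by_cases hy : y ∈ W d r
          · rw [Set.indicator_of_mem hy]
            obtain ⟨h1, _⟩ := hWdist d r x hxball y hy
            rw [Real.norm_eq_abs, abs_of_nonneg (by positivity)]
            have h2 : (0:ℝ) < (r:ℝ)/2 := by linarith
            calc 1 / ‖x - y‖ ≤ 1 / ((r:ℝ)/2) := one_div_le_one_div_of_le h2 h1
              _ = 2 / (r:ℝ) := one_div_div _ _
          · rw [Set.indicator_of_notMem hy]
            simp only [norm_zero]
            positivity
        have hintg : Integrable ((W d r).indicator (fun y => 1 / ‖x - y‖)) ν := by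
          refine Integrable.mono' (integrable_const (2/(r:ℝ)))
            ((((measurable_const.div
              ((continuous_const.sub continuous_id).norm.measurable))).indicator
              (hWmeas d r)).aestronglyMeasurable) (Filter.Eventually.of_forall hbound)
        have hzero : (W d r).indicator (fun y => 1 / ‖x - y‖) =ᵐ[ν] 0 := by
          refine (integral_eq_zero_iff_of_nonneg ?_ hintg).mp ?_
          · intro y
            exact Set.indicator_nonneg (fun z _ => by positivity) y
          · rw [← hfun]
            exact hint0
        rw [measure_eq_zero_iff_ae_notMem]
        filter_upwards [hzero] with y hy
        intro hyW
        rw [Set.indicator_of_mem hyW] at hy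
        obtain ⟨h1, _⟩ := hWdist d r x hxball y hyW
        have hpos : (0:ℝ) < 1 / ‖x - y‖ := by
          have : (0:ℝ) < ‖x - y‖ := by
            have := Metric.mem_ball.mp hxball
            have h0 : (0:ℝ) ≤ dist x d := dist_nonneg
            have : (0:ℝ) < (r:ℝ)/2 := by linarith
            linarith [h1]
          positivity
        simp only [Pi.zero_apply] at hy
        linarith [hpos, hy.le, hy.ge]
      obtain ⟨x₀, hx₀bad, hx₀⟩ :=
        ((frequently_ae_iff.mpr hS).and_eventually hmain).exists
      have hGnull : ν Good = 0 := by
        have hsub : Good ⊆ ⋃ (d ∈ D), ⋃ (r : ℚ),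
            (if x₀ ∈ Metric.ball d ((r:ℝ)/2) then W d r else ∅) := by
          intro y hy
          have hyx : y ≠ x₀ := fun hEq => hx₀bad (hEq ▸ hy)
          have hρ : 0 < dist y x₀ := dist_pos.mpr hyx
          obtain ⟨r, hr0, hrlt⟩ : ∃ r : ℚ, 0 < (r:ℝ) ∧ (r:ℝ) < dist y x₀ / 2 := by
            obtain ⟨q, hq1, hq2⟩ := exists_rat_btwn (by positivity : (0:ℝ) < dist y x₀/2)
            exact ⟨q, by exact_mod_cast hq1, hq2⟩
          obtain ⟨d, hdD, hdd⟩ := hDd.exists_dist_lt x₀ (by positivity : (0:ℝ) < (r:ℝ)/2)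
          refine Set.mem_biUnion hdD (Set.mem_iUnion.mpr ⟨r, ?_⟩)
          have hx₀ball : x₀ ∈ Metric.ball d ((r:ℝ)/2) := Metric.mem_ball.mpr (by
            rw [dist_comm] at hdd ⊢
            exact hdd)
          rw [if_pos hx₀ball]
          refine ⟨?_, hy⟩
          simp only [Set.mem_compl_iff, Metric.mem_ball, not_lt]
          have htri : dist y x₀ ≤ dist y d + dist d x₀ := dist_triangle y d x₀
          have hdx : dist x₀ d < (r:ℝ)/2 := hdd
          rw [dist_comm d x₀] at htri
          linarith
        refine measure_mono_null hsub ?_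
        refine (measure_biUnion_null_iff hDc).mpr fun d _ => ?_
        refine measure_iUnion_null_iff.mpr fun r => ?_
        by_cases hball : x₀ ∈ Metric.ball d ((r:ℝ)/2)
        · rw [if_pos hball]
          exact hx₀ d ‹d ∈ D› r hx₀bad hball
        · rw [if_neg hball]
          exact measure_empty
      have hTz : ∀ f : Lp ℝ 2 ν, 0 ≤ᵐ[ν] (f : E3 → ℝ) → T f = 0 := by
        intro f hf
        have hae : ∀ᵐ x ∂ν, x ∉ Good := measure_eq_zero_iff_ae_notMem.mp hGnull
        have hz : (T f : E3 → ℝ) =ᵐ[ν] 0 := by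
          filter_upwards [hvanish f hf, hae] with x h1 h2
          exact h1 h2
        exact Lp.ext (hz.trans (Lp.coeFn_zero ℝ 2 ν).symm)
      apply ContinuousLinearMap.ext
      intro f
      rw [← hposneg f, map_sub, hTz _ (hposnn f), hTz _ (hnegnn f), sub_zero,
        ContinuousLinearMap.zero_apply]
    rw [hT0]
    simp only [ContinuousLinearMap.comp_zero, norm_zero, mul_zero]
    exact le_rfl
end

section
/- Let u be the function on ℝ³ equal to 1 for |x| ≤ 1 and 1/|x| for |x| ≥ 1. Then u is continuous, harmonic off the unit sphere, tends to 0 at infinity, and satisfies the jump condition ∂u/∂n_e + ∂u/∂n_i = −u on the unit sphere, i.e., the sum of the exterior and interior normal derivatives equals −1·u(x) for every x with |x| = 1. -/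
open Filter

noncomputable section CriticalSphereAux

/-- squared Euclidean norm as sum of squares of coordinates -/
def cs_r2 (y : EuclideanSpace ℝ (Fin 3)) : ℝ := ∑ i, y i ^ 2

/-- derivative of `cs_r2` -/
def cs_L (y : EuclideanSpace ℝ (Fin 3)) : EuclideanSpace ℝ (Fin 3) →L[ℝ] ℝ :=
  ∑ i, (2 * y i) • EuclideanSpace.proj i

lemma cs_r2_eq (y : EuclideanSpace ℝ (Fin 3)) : cs_r2 y = ‖y‖ ^ 2 := by
  rw [EuclideanSpace.norm_eq, Real.sq_sqrt (by positivity)]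
  simp [cs_r2, Real.norm_eq_abs, sq_abs]

lemma cs_hasFDerivAt_r2 (y : EuclideanSpace ℝ (Fin 3)) : HasFDerivAt cs_r2 (cs_L y) y := by
  refine HasFDerivAt.fun_sum fun i _ => ?_
  have h := (hasDerivAt_pow 2 (y i)).comp_hasFDerivAt y
    (EuclideanSpace.proj (𝕜 := ℝ) i).hasFDerivAt
  rw [show ((2:ℕ):ℝ) * y i ^ (2 - 1) = 2 * y i by norm_num] at h
  exact h

lemma cs_L_apply (y : EuclideanSpace ℝ (Fin 3)) (j : Fin 3) :
    cs_L y (EuclideanSpace.single j 1) = 2 * y j := by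
  simp [cs_L, ContinuousLinearMap.sum_apply, EuclideanSpace.single_apply,
    mul_ite, Finset.sum_ite_eq]

lemma cs_hasFDerivAt_w (y : EuclideanSpace ℝ (Fin 3)) (h : 0 < cs_r2 y) :
    HasFDerivAt (fun z => cs_r2 z ^ (-(1/2) : ℝ))
      ((-(1/2) * cs_r2 y ^ (-(3/2) : ℝ)) • cs_L y) y := by
  have h1 := (Real.hasDerivAt_rpow_const (x := cs_r2 y) (p := -(1/2))
    (Or.inl h.ne')).comp_hasFDerivAt y (cs_hasFDerivAt_r2 y)
  rw [show (-(1/2) : ℝ) - 1 = -(3/2) by norm_num] at h1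
  exact h1

def cs_q (y : EuclideanSpace ℝ (Fin 3)) : ℝ := cs_r2 y ^ (-(3/2) : ℝ)

lemma cs_hasFDerivAt_q (y : EuclideanSpace ℝ (Fin 3)) (h : 0 < cs_r2 y) :
    HasFDerivAt cs_q ((-(3/2) * cs_r2 y ^ (-(5/2) : ℝ)) • cs_L y) y := by
  have h1 := (Real.hasDerivAt_rpow_const (x := cs_r2 y) (p := -(3/2))
    (Or.inl h.ne')).comp_hasFDerivAt y (cs_hasFDerivAt_r2 y)
  rw [show (-(3/2) : ℝ) - 1 = -(5/2) by norm_num] at h1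
  exact h1

def cs_p (j : Fin 3) (y : EuclideanSpace ℝ (Fin 3)) : ℝ := -(y j * cs_q y)

lemma cs_hasFDerivAt_p (j : Fin 3) (y : EuclideanSpace ℝ (Fin 3)) (h : 0 < cs_r2 y) :
    HasFDerivAt (cs_p j)
      (-((y j) • ((-(3/2) * cs_r2 y ^ (-(5/2) : ℝ)) • cs_L y) + cs_q y • EuclideanSpace.proj j)) y := by
  exact ((EuclideanSpace.proj (𝕜 := ℝ) j).hasFDerivAt.mul (cs_hasFDerivAt_q y h)).neg

end CriticalSphereAux

/-- The Laplacian of a function on `ℝ³`, written via second partial derivatives in the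
standard orthonormal directions. -/
noncomputable def laplacian3 (u : EuclideanSpace ℝ (Fin 3) → ℝ)
    (x : EuclideanSpace ℝ (Fin 3)) : ℝ :=
  ∑ i : Fin 3,
    fderiv ℝ (fun y => fderiv ℝ u y (EuclideanSpace.single i 1)) x (EuclideanSpace.single i 1)

theorem critical_sphere_solution
    (u : EuclideanSpace ℝ (Fin 3) → ℝ)
    (hu : ∀ x, u x = if ‖x‖ ≤ 1 then 1 else 1 / ‖x‖) :
    Continuous u ∧
    (∀ x, ‖x‖ ≠ 1 → laplacian3 u x = 0) ∧
    Tendsto u (Filter.cocompact (EuclideanSpace ℝ (Fin 3))) (nhds 0) ∧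
    (∀ x : EuclideanSpace ℝ (Fin 3), ‖x‖ = 1 →
      ∃ de di : ℝ,
        HasDerivWithinAt (fun t : ℝ => u (x + t • x)) de (Set.Ici 0) 0 ∧
        HasDerivWithinAt (fun t : ℝ => u (x + t • (-x))) di (Set.Ici 0) 0 ∧
        de + di = -u x) := by
  -- uniform formula
  have humax : ∀ x, u x = (max 1 ‖x‖)⁻¹ := by
    intro x
    rw [hu]
    rcases le_or_gt ‖x‖ 1 with h | h
    · rw [if_pos h, max_eq_left h]; norm_num
    · rw [if_neg (not_le.mpr h), max_eq_right h.le, one_div]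
  refine ⟨?_, ?_, ?_, ?_⟩
  · -- continuity
    have : Continuous fun x : EuclideanSpace ℝ (Fin 3) => (max 1 ‖x‖)⁻¹ := by
      refine (continuous_const.max continuous_norm).inv₀ fun x => ?_
      have : (0:ℝ) < max 1 ‖x‖ := lt_of_lt_of_le one_pos (le_max_left _ _)
      exact this.ne'
    exact (funext humax : u = _) ▸ this
  · -- harmonic off the sphere
    intro x hx
    rcases lt_or_gt_of_ne hx with h | h
    · -- inside: u is locally constant
      have hball : IsOpen {z : EuclideanSpace ℝ (Fin 3) | ‖z‖ < 1} :=
        isOpen_lt continuous_norm continuous_const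
      have hloc : ∀ z, ‖z‖ < 1 → fderiv ℝ u z = 0 := by
        intro z hz
        have he : u =ᶠ[nhds z] fun _ => (1:ℝ) := by
          filter_upwards [hball.mem_nhds hz] with w hw
          rw [hu]; exact if_pos (le_of_lt hw)
        rw [he.fderiv_eq, fderiv_fun_const]; rfl
      have hsum : ∀ i : Fin 3,
          fderiv ℝ (fun y => fderiv ℝ u y (EuclideanSpace.single i 1)) x
            (EuclideanSpace.single i 1) = 0 := by
        intro i
        have he : (fun y => fderiv ℝ u y (EuclideanSpace.single i 1)) =ᶠ[nhds x]
            fun _ => (0:ℝ) := by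
          filter_upwards [hball.mem_nhds h] with w hw
          rw [hloc w hw]; rfl
        rw [he.fderiv_eq, fderiv_fun_const]; rfl
      simp [laplacian3, hsum]
    · -- outside
      have hout : IsOpen {z : EuclideanSpace ℝ (Fin 3) | 1 < ‖z‖} :=
        isOpen_lt continuous_const continuous_norm
      have hr2pos : ∀ z : EuclideanSpace ℝ (Fin 3), 1 < ‖z‖ → 0 < cs_r2 z := by
        intro z hz; rw [cs_r2_eq]; positivity
      have hu_eq_w : ∀ z : EuclideanSpace ℝ (Fin 3), 1 < ‖z‖ →
          u z = cs_r2 z ^ (-(1/2) : ℝ) := by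
        intro z hz
        rw [hu, if_neg (not_le.mpr hz), cs_r2_eq, ← Real.rpow_natCast ‖z‖ 2,
          ← Real.rpow_mul (norm_nonneg z)]
        norm_num
        rw [Real.rpow_neg_one]
      have hfd_u : ∀ z : EuclideanSpace ℝ (Fin 3), 1 < ‖z‖ →
          fderiv ℝ u z = (-(1/2) * cs_r2 z ^ (-(3/2) : ℝ)) • cs_L z := by
        intro z hz
        have he : u =ᶠ[nhds z] fun y => cs_r2 y ^ (-(1/2) : ℝ) := by
          filter_upwards [hout.mem_nhds hz] with w hw using hu_eq_w w hw
        rw [he.fderiv_eq]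
        exact (cs_hasFDerivAt_w z (hr2pos z hz)).fderiv
      have key : ∀ i : Fin 3,
          fderiv ℝ (fun y => fderiv ℝ u y (EuclideanSpace.single i 1)) x
            (EuclideanSpace.single i 1)
          = 3 * x i ^ 2 * cs_r2 x ^ (-(5/2) : ℝ) - cs_r2 x ^ (-(3/2) : ℝ) := by
        intro i
        have he : (fun y => fderiv ℝ u y (EuclideanSpace.single i 1)) =ᶠ[nhds x]
            cs_p i := by
          filter_upwards [hout.mem_nhds h] with w hw
          rw [hfd_u w hw]
          simp only [ContinuousLinearMap.smul_apply, cs_L_apply, cs_p, cs_q, smul_eq_mul]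
          ring
        rw [he.fderiv_eq, (cs_hasFDerivAt_p i x (hr2pos x h)).fderiv]
        have hproj : (EuclideanSpace.proj (𝕜 := ℝ) i) (EuclideanSpace.single i 1) = 1 := by
          simp
        simp only [ContinuousLinearMap.neg_apply, ContinuousLinearMap.add_apply,
          ContinuousLinearMap.smul_apply, cs_L_apply, hproj, smul_eq_mul, cs_q]
        ring
      have hsum : laplacian3 u x
          = 3 * cs_r2 x * cs_r2 x ^ (-(5/2) : ℝ) - 3 * cs_r2 x ^ (-(3/2) : ℝ) := by
        rw [laplacian3, Finset.sum_congr rfl fun i _ => key i, Finset.sum_sub_distrib,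
          ← Finset.sum_mul, ← Finset.mul_sum, Finset.sum_const, cs_r2]
        simp only [Finset.card_univ, Fintype.card_fin, nsmul_eq_mul, Nat.cast_ofNat]
      rw [hsum]
      have hpos := hr2pos x h
      have hmul : cs_r2 x * cs_r2 x ^ (-(5/2) : ℝ) = cs_r2 x ^ (-(3/2) : ℝ) := by
        rw [show (-(3/2) : ℝ) = 1 + -(5/2) by norm_num, Real.rpow_add hpos, Real.rpow_one]
      rw [mul_assoc, hmul]; ring
  · -- decay at infinity
    have h1 : Tendsto (fun x : EuclideanSpace ℝ (Fin 3) => max 1 ‖x‖)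
        (Filter.cocompact _) atTop :=
      tendsto_atTop_mono (fun x => le_max_right 1 ‖x‖) tendsto_norm_cocompact_atTop
    have h2 := h1.inv_tendsto_atTop
    have : u = (fun x : EuclideanSpace ℝ (Fin 3) => max 1 ‖x‖)⁻¹ := by
      funext x; rw [humax]; rfl
    rw [this]; exact h2
  · -- jump condition
    intro x hx
    refine ⟨-1, 0, ?_, ?_, ?_⟩
    · -- exterior derivative
      have hg : HasDerivAt (fun t : ℝ => (1 + t)⁻¹) (-1) 0 := by
        have h1 : HasDerivAt (fun t : ℝ => 1 + t) 1 0 :=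
          (hasDerivAt_id 0).const_add 1
        have := h1.inv (by norm_num)
        rw [show (-1 / (1 + 0) ^ 2 : ℝ) = -1 by norm_num] at this
        exact this
      refine (hg.hasDerivWithinAt).congr (fun t ht => ?_) ?_
      · have hts : x + t • x = (1 + t) • x := by
          rw [add_smul, one_smul]
        rw [hts, hu, norm_smul, hx, mul_one, Real.norm_eq_abs,
          abs_of_nonneg (by linarith [Set.mem_Ici.mp ht] : (0:ℝ) ≤ 1 + t)]
        split_ifs with hle
        · have h1t : 1 + t = 1 := le_antisymm hle (by linarith [Set.mem_Ici.mp ht])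
          rw [h1t]; norm_num
        · rw [one_div]
      · rw [hu]
        simp [hx]
    · -- interior derivative
      refine (hasDerivWithinAt_const 0 (Set.Ici 0) (1:ℝ)).congr_of_eventuallyEq ?_ ?_
      · have h2 : ∀ᶠ t : ℝ in nhds 0, t < 2 := eventually_lt_nhds (by norm_num)
        filter_upwards [eventually_nhdsWithin_of_eventually_nhds h2,
          self_mem_nhdsWithin] with t hlt hts
        have hts' : x + t • (-x) = (1 - t) • x := by
          rw [sub_smul, one_smul, smul_neg, sub_eq_add_neg]
        rw [hts', hu, norm_smul, hx, mul_one, Real.norm_eq_abs]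
        have : |1 - t| ≤ 1 := by
          rw [abs_le]; constructor <;> [linarith; linarith [Set.mem_Ici.mp hts]]
        rw [if_pos this]
      · rw [hu]; simp [hx]
    · rw [hu]; simp [hx]
end
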